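/- Suppose F : ℝⁿ → ℝ is differentiable with L-Lipschitz gradient (L > 0), there is l ∈ ℝ such that u ↦ F(u) + (l/2)‖u‖² is convex, and γ > 0. Let w, x, y, y⁺ ∈ ℝⁿ satisfy ∇F(y) + (1/γ)(y − w) = 0 and ∇F(y⁺) + (1/γ)(y⁺ − x) = 0, and set z := (x − w) + y (so that x = w + z − y). Then ‖y⁺ − z‖² ≤ [(−1 + 2γl) + (1 + γL)²] · ‖y⁺ − y‖². -/

import Mathlib

open InnerProductSpace

/-- Monotonicity of the gradient of an `l`-weakly convex function. -/
lemma grad_mono {n : ℕ}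
    (F : EuclideanSpace ℝ (Fin n) → ℝ)
    (F' : EuclideanSpace ℝ (Fin n) → EuclideanSpace ℝ (Fin n))
    (l : ℝ)
    (hdiff : ∀ u, HasGradientAt F (F' u) u)
    (hconv : ConvexOn ℝ Set.univ (fun u => F u + (l/2) * ‖u‖ ^ 2))
    (y yp : EuclideanSpace ℝ (Fin n)) :
    -(l * ‖yp - y‖ ^ 2) ≤ inner ℝ (F' yp - F' y) (yp - y) := by
  set d := yp - y with hd
  set c : ℝ → EuclideanSpace ℝ (Fin n) := fun t => y + t • d with hc
  have hcderiv : ∀ t : ℝ, HasDerivAt c d t := by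
    intro t
    have := ((hasDerivAt_id t).smul_const d).const_add y
    simp only [id, one_smul] at this
    exact this
  set φ : ℝ → ℝ := fun t => F (c t) + (l/2) * ‖c t‖ ^ 2 with hφ
  have hφderiv : ∀ t : ℝ, HasDerivAt φ
      ((inner ℝ (F' (c t)) d : ℝ) + l * (inner ℝ (c t) d : ℝ)) t := by
    intro t
    have h1 : HasDerivAt (fun t => F (c t)) ((inner ℝ (F' (c t)) d : ℝ)) t := by
      have := (hasGradientAt_iff_hasFDerivAt.mp (hdiff (c t))).comp_hasDerivAt t (hcderiv t)
      simp at this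
      exact this
    have h2 : HasDerivAt (fun t => (inner ℝ (c t) (c t) : ℝ))
        ((inner ℝ (c t) d : ℝ) + (inner ℝ d (c t) : ℝ)) t :=
      (hcderiv t).inner ℝ (hcderiv t)
    have h2' : HasDerivAt (fun t => (l/2) * ‖c t‖ ^ 2) (l * (inner ℝ (c t) d : ℝ)) t := by
      have := h2.const_mul (l/2)
      have he : (l/2) * ((inner ℝ (c t) d : ℝ) + (inner ℝ d (c t) : ℝ))
          = l * (inner ℝ (c t) d : ℝ) := by
        rw [real_inner_comm d (c t)]; ring
      rw [he] at this
      refine this.congr_deriv rfl |>.congr_of_eventuallyEq ?_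
      filter_upwards with s
      rw [real_inner_self_eq_norm_sq]
    exact h1.add h2'
  have hconvφ : ConvexOn ℝ Set.univ φ := by
    have := hconv.comp_affineMap (AffineMap.lineMap y yp : ℝ →ᵃ[ℝ] EuclideanSpace ℝ (Fin n))
    simp only [Set.preimage_univ] at this
    have heq : φ = (fun u => F u + (l/2) * ‖u‖ ^ 2) ∘ ⇑(AffineMap.lineMap y yp : ℝ →ᵃ[ℝ] EuclideanSpace ℝ (Fin n)) := by
      funext t
      simp [φ, c, AffineMap.lineMap_apply, hd]
      abel_nf
    rw [heq]; exact this
  have h01 : (0:ℝ) < 1 := one_pos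
  have hle1 := hconvφ.le_slope_of_hasDerivAt (Set.mem_univ 0) (Set.mem_univ 1) h01 (hφderiv 0)
  have hle2 := hconvφ.slope_le_of_hasDerivAt (Set.mem_univ 0) (Set.mem_univ 1) h01 (hφderiv 1)
  have hkey := hle1.trans hle2
  have hc0 : c 0 = y := by simp [c]
  have hc1 : c 1 = yp := by simp [c, hd]
  rw [hc0, hc1] at hkey
  have hsub : (inner ℝ (F' yp - F' y) d : ℝ) = inner ℝ (F' yp) d - inner ℝ (F' y) d :=
    inner_sub_left _ _ _
  have hid : (inner ℝ (yp - y) d : ℝ) = ‖d‖ ^ 2 := by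
    rw [hd, real_inner_self_eq_norm_sq]
  have hsub2 : (inner ℝ yp d : ℝ) - inner ℝ y d = ‖d‖ ^ 2 := by
    rw [← inner_sub_left]; exact hid
  rw [hsub]
  have h3 : l * (inner ℝ yp d : ℝ) - l * (inner ℝ y d : ℝ) = l * ‖d‖ ^ 2 := by
    linear_combination l * hsub2
  linarith

theorem stmt_2 {n : ℕ}
    (F : EuclideanSpace ℝ (Fin n) → ℝ)
    (F' : EuclideanSpace ℝ (Fin n) → EuclideanSpace ℝ (Fin n))
    (L l γ : ℝ) (hL : 0 < L) (hγ : 0 < γ)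
    (hdiff : ∀ u, HasGradientAt F (F' u) u)
    (hlip : ∀ u v, ‖F' u - F' v‖ ≤ L * ‖u - v‖)
    (hconv : ConvexOn ℝ Set.univ (fun u => F u + (l/2) * ‖u‖ ^ 2))
    (w x y yp z : EuclideanSpace ℝ (Fin n))
    (hopt : F' y + (1/γ) • (y - w) = 0)
    (hoptp : F' yp + (1/γ) • (yp - x) = 0)
    (hz : z = (x - w) + y) :
    ‖yp - z‖ ^ 2 ≤ ((-1 + 2 * γ * l) + (1 + γ * L) ^ 2) * ‖yp - y‖ ^ 2 := by
  have hγ0 : γ ≠ 0 := ne_of_gt hγ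
  -- y - w = -γ • F' y
  have h1 : y - w = -(γ • F' y) := by
    have := congrArg (fun v => γ • v) hopt
    simp only [smul_add, smul_smul, smul_zero] at this
    rw [mul_one_div, div_self hγ0, one_smul] at this
    linear_combination (norm := module) this
  have h2 : yp - x = -(γ • F' yp) := by
    have := congrArg (fun v => γ • v) hoptp
    simp only [smul_add, smul_smul, smul_zero] at this
    rw [mul_one_div, div_self hγ0, one_smul] at this
    linear_combination (norm := module) this
  have hzeq : yp - z = γ • (F' y - F' yp) := by
    rw [hz]
    have : yp - (x - w + y) = (yp - x) - (y - w) := by abel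
    rw [this, h1, h2]
    module
  have hnorm : ‖yp - z‖ ≤ γ * L * ‖yp - y‖ := by
    rw [hzeq, norm_smul, Real.norm_eq_abs, abs_of_pos hγ]
    calc γ * ‖F' y - F' yp‖ ≤ γ * (L * ‖y - yp‖) :=
          mul_le_mul_of_nonneg_left (hlip y yp) hγ.le
      _ = γ * L * ‖yp - y‖ := by rw [norm_sub_rev]; ring
  have hmono := grad_mono F F' l hdiff hconv y yp
  have hcs : (inner ℝ (F' yp - F' y) (yp - y) : ℝ) ≤ ‖F' yp - F' y‖ * ‖yp - y‖ :=
    real_inner_le_norm _ _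
  have hlip2 : ‖F' yp - F' y‖ ≤ L * ‖yp - y‖ := hlip yp y
  have hpos : 0 ≤ (l + L) * ‖yp - y‖ ^ 2 := by
    nlinarith [norm_nonneg (yp - y), norm_nonneg (F' yp - F' y)]
  nlinarith [norm_nonneg (yp - z), norm_nonneg (yp - y), sq_nonneg (γ * L * ‖yp - y‖)]
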